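/- Let F be a linearly ordered field with integer part I and let α, β ∈ F be positive irrationals such that α^{−1} + β^{−1} = 1. Then N_α ∩ N_β = {0} and N_α ∪ N_β = I^{≥0}. -/

import Mathlib

/-- `N_α`: the set `{⌊n·α⌋ : n ∈ I, n ≥ 0}`, where `fl` is the floor function
associated to the integer part `I` of `F`. -/
def Nset {F : Type*} [Field F] [LinearOrder F] [IsStrictOrderedRing F] (I : Subring F) (fl : F → F) (α : F) : Set F :=
  {y | ∃ n, n ∈ I ∧ 0 ≤ n ∧ y = fl (n * α)}

/-- `I^{≥0}`: the nonnegative elements of `I`. -/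
def Inonneg {F : Type*} [Field F] [LinearOrder F] [IsStrictOrderedRing F] (I : Subring F) : Set F :=
  {n | n ∈ I ∧ 0 ≤ n}

/-- An element of `F` is rational (with respect to `I`) if it lies in the
fraction field of `I` viewed inside `F`. -/
def IsRat {F : Type*} [Field F] [LinearOrder F] [IsStrictOrderedRing F] (I : Subring F) (α : F) : Prop :=
  ∃ p ∈ I, ∃ q ∈ I, q ≠ 0 ∧ α = p / q

section Aux

variable {F : Type*} [Field F] [LinearOrder F] [IsStrictOrderedRing F] {I : Subring F} {fl : F → F}

lemma aux_one_le (hdisc : ∀ x ∈ I, ¬(0 < x ∧ x < 1)) {x : F} (hx : x ∈ I) (h : 0 < x) :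
    1 ≤ x := by
  by_contra h1
  exact hdisc x hx ⟨h, lt_of_not_ge h1⟩

lemma aux_le_zero (hdisc : ∀ x ∈ I, ¬(0 < x ∧ x < 1)) {x : F} (hx : x ∈ I) (h : x < 1) :
    x ≤ 0 := by
  by_contra h0
  exact absurd (aux_one_le hdisc hx (lt_of_not_ge h0)) (not_le.2 h)

lemma aux_le_fl (hdisc : ∀ x ∈ I, ¬(0 < x ∧ x < 1))
    (hfl : ∀ x : F, fl x ∈ I ∧ fl x ≤ x ∧ x < fl x + 1)
    {n : F} (hn : n ∈ I) (x : F) : n ≤ fl x ↔ n ≤ x := by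
  obtain ⟨hI, hle, hlt⟩ := hfl x
  constructor
  · intro h; linarith
  · intro h
    have hm : n - fl x ∈ I := I.sub_mem hn hI
    have := aux_le_zero hdisc hm (by linarith)
    linarith

lemma aux_fl_eq (hdisc : ∀ x ∈ I, ¬(0 < x ∧ x < 1))
    (hfl : ∀ x : F, fl x ∈ I ∧ fl x ≤ x ∧ x < fl x + 1)
    {n : F} (hn : n ∈ I) {x : F} (h1 : n ≤ x) (h2 : x < n + 1) : fl x = n := by
  obtain ⟨hI, hle, hlt⟩ := hfl x
  have ha : n ≤ fl x := (aux_le_fl hdisc hfl hn x).2 h1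
  have hm : fl x - n ∈ I := I.sub_mem hI hn
  have := aux_le_zero hdisc hm (by linarith)
  linarith [le_antisymm (by linarith : fl x ≤ n) ha]

lemma aux_ne {α : F} (hα0 : 0 < α) (hirr : ¬ IsRat I α) {m : F} (hm : m ∈ I)
    {k : F} (hk : k ∈ I) (hk0 : k ≠ 0) : m * α ≠ k := by
  intro h
  have hm0 : m ≠ 0 := by
    rintro rfl; simp at h; exact hk0 h.symm
  exact hirr ⟨k, hk, m, hm, hm0, by field_simp; linarith [h]⟩

lemma aux_fl_zero (hdisc : ∀ x ∈ I, ¬(0 < x ∧ x < 1))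
    (hfl : ∀ x : F, fl x ∈ I ∧ fl x ≤ x ∧ x < fl x + 1) (α : F) :
    (0 : F) ∈ Nset I fl α :=
  ⟨0, I.zero_mem, le_refl 0,
    (aux_fl_eq hdisc hfl I.zero_mem (by simp) (by simp)).symm⟩

lemma aux_subset (hdisc : ∀ x ∈ I, ¬(0 < x ∧ x < 1))
    (hfl : ∀ x : F, fl x ∈ I ∧ fl x ≤ x ∧ x < fl x + 1)
    {α : F} (hα0 : 0 < α) {x : F} (hx : x ∈ Nset I fl α) : x ∈ I ∧ 0 ≤ x := by
  obtain ⟨n, hnI, hn0, rfl⟩ := hx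
  obtain ⟨hI, hle, hlt⟩ := hfl (n * α)
  refine ⟨hI, ?_⟩
  have hna : 0 ≤ n * α := mul_nonneg hn0 hα0.le
  have := aux_le_zero hdisc (I.neg_mem hI) (by linarith)
  linarith

lemma aux_mem_iff (hdisc : ∀ x ∈ I, ¬(0 < x ∧ x < 1))
    (hfl : ∀ x : F, fl x ∈ I ∧ fl x ≤ x ∧ x < fl x + 1)
    {α : F} (hα0 : 0 < α) (hα1 : 1 < α) (hirr : ¬ IsRat I α)
    {k : F} (hk : k ∈ I) (hk1 : 1 ≤ k) :
    k ∈ Nset I fl α ↔ fl ((k + 1) / α) = fl (k / α) + 1 := by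
  obtain ⟨haI, ha_le, ha_lt⟩ := hfl (k / α)
  obtain ⟨ha'I, ha'_le, ha'_lt⟩ := hfl ((k + 1) / α)
  have hk0 : k ≠ 0 := by intro h; rw [h] at hk1; linarith
  have hk1I : k + 1 ∈ I := I.add_mem hk I.one_mem
  have hk10 : k + 1 ≠ 0 := by intro h; nlinarith
  have hdivlt : (k + 1) / α < k / α + 1 := by
    rw [add_div]
    have h1 : 1 / α < 1 := by rw [div_lt_one hα0]; exact hα1
    linarith
  have ha'up : fl ((k + 1) / α) ≤ fl (k / α) + 1 := by
    have hm : fl ((k + 1) / α) - (fl (k / α) + 1) ∈ I :=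
      I.sub_mem ha'I (I.add_mem haI I.one_mem)
    have := aux_le_zero hdisc hm (by linarith)
    linarith
  constructor
  · rintro ⟨n, hnI, hn0, hkeq⟩
    obtain ⟨hI, hle, hlt⟩ := hfl (n * α)
    rw [← hkeq] at hle hlt
    have hne1 : n * α ≠ k := aux_ne hα0 hirr hnI hk hk0
    have hlt1 : k < n * α := lt_of_le_of_ne hle (Ne.symm hne1)
    have hgt : k / α < n := (div_lt_iff₀ hα0).mpr (by linarith)
    have hle2 : n ≤ (k + 1) / α := (le_div_iff₀ hα0).mpr (by linarith)
    have hna' : n ≤ fl ((k + 1) / α) := (aux_le_fl hdisc hfl hnI _).2 hle2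
    have han : fl (k / α) < n := lt_of_le_of_lt ha_le hgt
    have h1n : fl (k / α) + 1 ≤ n := by
      have hm : n - fl (k / α) ∈ I := I.sub_mem hnI haI
      have := aux_one_le hdisc hm (by linarith)
      linarith
    linarith [le_antisymm ha'up (le_trans h1n hna')]
  · intro h
    refine ⟨fl (k / α) + 1, I.add_mem haI I.one_mem, ?_, ?_⟩
    · have hpos : 0 < k / α := div_pos (by linarith) hα0
      linarith
    · have h1 : k < (fl (k / α) + 1) * α := (div_lt_iff₀ hα0).mp ha_lt
      have h2 : (fl (k / α) + 1) * α ≤ k + 1 := by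
        have hle' : fl (k / α) + 1 ≤ (k + 1) / α := by rw [← h]; exact ha'_le
        exact (le_div_iff₀ hα0).mp hle'
      have hne : (fl (k / α) + 1) * α ≠ k + 1 :=
        aux_ne hα0 hirr (I.add_mem haI I.one_mem) hk1I hk10
      have h3 : (fl (k / α) + 1) * α < k + 1 := lt_of_le_of_ne h2 hne
      exact (aux_fl_eq hdisc hfl hk h1.le h3).symm

lemma aux_delta (hdisc : ∀ x ∈ I, ¬(0 < x ∧ x < 1))
    (hfl : ∀ x : F, fl x ∈ I ∧ fl x ≤ x ∧ x < fl x + 1)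
    {α : F} (hα0 : 0 < α) (hα1 : 1 < α) (k : F) :
    fl ((k + 1) / α) = fl (k / α) ∨ fl ((k + 1) / α) = fl (k / α) + 1 := by
  obtain ⟨haI, ha_le, ha_lt⟩ := hfl (k / α)
  obtain ⟨ha'I, ha'_le, ha'_lt⟩ := hfl ((k + 1) / α)
  have hmono : k / α ≤ (k + 1) / α := by
    exact (div_le_div_iff_of_pos_right hα0).mpr (by linarith)
  have hlow : fl (k / α) ≤ fl ((k + 1) / α) :=
    (aux_le_fl hdisc hfl haI _).2 (le_trans ha_le hmono)
  have hdivlt : (k + 1) / α < k / α + 1 := by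
    rw [add_div]
    have h1 : 1 / α < 1 := by rw [div_lt_one hα0]; exact hα1
    linarith
  have hup : fl ((k + 1) / α) ≤ fl (k / α) + 1 := by
    have hm : fl ((k + 1) / α) - (fl (k / α) + 1) ∈ I :=
      I.sub_mem ha'I (I.add_mem haI I.one_mem)
    have := aux_le_zero hdisc hm (by linarith)
    linarith
  rcases eq_or_lt_of_le hlow with h | h
  · exact Or.inl h.symm
  · right
    have hm : fl ((k + 1) / α) - fl (k / α) ∈ I := I.sub_mem ha'I haI
    have := aux_one_le hdisc hm (by linarith)
    linarith

lemma aux_flsum (hdisc : ∀ x ∈ I, ¬(0 < x ∧ x < 1))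
    (hfl : ∀ x : F, fl x ∈ I ∧ fl x ≤ x ∧ x < fl x + 1)
    {α β : F} (hα0 : 0 < α) (hβ0 : 0 < β)
    (hαirr : ¬ IsRat I α) (hβirr : ¬ IsRat I β) (hsum : α⁻¹ + β⁻¹ = 1)
    {k : F} (hk : k ∈ I) (hk1 : 1 ≤ k) :
    fl (k / α) + fl (k / β) = k - 1 := by
  obtain ⟨haI, ha_le, ha_lt⟩ := hfl (k / α)
  obtain ⟨hbI, hb_le, hb_lt⟩ := hfl (k / β)
  have hk0 : k ≠ 0 := by intro h; rw [h] at hk1; linarith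
  have hane : fl (k / α) ≠ k / α := by
    intro h
    have : fl (k / α) * α = k := by rw [h]; field_simp
    exact aux_ne hα0 hαirr haI hk hk0 this
  have hbne : fl (k / β) ≠ k / β := by
    intro h
    have : fl (k / β) * β = k := by rw [h]; field_simp
    exact aux_ne hβ0 hβirr hbI hk hk0 this
  have ha_lt' : fl (k / α) < k / α := lt_of_le_of_ne ha_le hane
  have hb_lt' : fl (k / β) < k / β := lt_of_le_of_ne hb_le hbne
  have hksum : k / α + k / β = k := by
    rw [div_eq_mul_inv, div_eq_mul_inv, ← mul_add, hsum, mul_one]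
  have hm : k - fl (k / α) - fl (k / β) ∈ I := I.sub_mem (I.sub_mem hk haI) hbI
  have h1 : 1 ≤ k - fl (k / α) - fl (k / β) := aux_one_le hdisc hm (by linarith)
  have h2 : k - fl (k / α) - fl (k / β) - 1 ≤ 0 :=
    aux_le_zero hdisc (I.sub_mem hm I.one_mem) (by linarith)
  linarith

end Aux

theorem stmt_4 {F : Type*} [Field F] [LinearOrder F] [IsStrictOrderedRing F] (I : Subring F) (fl : F → F)
    (hdisc : ∀ x ∈ I, ¬(0 < x ∧ x < 1))
    (hfl : ∀ x : F, fl x ∈ I ∧ fl x ≤ x ∧ x < fl x + 1)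
    (α β : F) (hα0 : 0 < α) (hβ0 : 0 < β)
    (hαirr : ¬ IsRat I α) (hβirr : ¬ IsRat I β)
    (hsum : α⁻¹ + β⁻¹ = 1) :
    Nset I fl α ∩ Nset I fl β = {0} ∧ Nset I fl α ∪ Nset I fl β = Inonneg I := by
  have hαi : 0 < α⁻¹ := inv_pos.2 hα0
  have hβi : 0 < β⁻¹ := inv_pos.2 hβ0
  have hα1 : 1 < α := by
    have h1 : α⁻¹ < 1 := by linarith
    have := mul_lt_mul_of_pos_right h1 hα0
    rwa [inv_mul_cancel₀ (ne_of_gt hα0), one_mul] at this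
  have hβ1 : 1 < β := by
    have h1 : β⁻¹ < 1 := by linarith
    have := mul_lt_mul_of_pos_right h1 hβ0
    rwa [inv_mul_cancel₀ (ne_of_gt hβ0), one_mul] at this
  have hone : ∀ x : F, x ∈ I → 0 ≤ x → x ≠ 0 → 1 ≤ x := by
    intro x hxI hx0 hxne
    exact aux_one_le hdisc hxI (lt_of_le_of_ne hx0 (Ne.symm hxne))
  constructor
  · ext x
    simp only [Set.mem_inter_iff, Set.mem_singleton_iff]
    constructor
    · rintro ⟨hxa, hxb⟩
      by_contra hx0
      obtain ⟨hxI, hxnn⟩ := aux_subset hdisc hfl hα0 hxa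
      have hx1 : 1 ≤ x := hone x hxI hxnn hx0
      have hA := (aux_mem_iff hdisc hfl hα0 hα1 hαirr hxI hx1).1 hxa
      have hB := (aux_mem_iff hdisc hfl hβ0 hβ1 hβirr hxI hx1).1 hxb
      have s1 := aux_flsum hdisc hfl hα0 hβ0 hαirr hβirr hsum hxI hx1
      have s2 := aux_flsum hdisc hfl hα0 hβ0 hαirr hβirr hsum
        (I.add_mem hxI I.one_mem) (by linarith : (1:F) ≤ x + 1)
      linarith
    · rintro rfl
      exact ⟨aux_fl_zero hdisc hfl α, aux_fl_zero hdisc hfl β⟩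
  · ext x
    simp only [Set.mem_union]
    constructor
    · rintro (h | h)
      · exact aux_subset hdisc hfl hα0 h
      · exact aux_subset hdisc hfl hβ0 h
    · rintro ⟨hxI, hxnn⟩
      rcases eq_or_ne x 0 with rfl | hx0
      · exact Or.inl (aux_fl_zero hdisc hfl α)
      have hx1 : 1 ≤ x := hone x hxI hxnn hx0
      have s1 := aux_flsum hdisc hfl hα0 hβ0 hαirr hβirr hsum hxI hx1
      have s2 := aux_flsum hdisc hfl hα0 hβ0 hαirr hβirr hsum
        (I.add_mem hxI I.one_mem) (by linarith : (1:F) ≤ x + 1)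
      rcases aux_delta hdisc hfl hα0 hα1 x with h1 | h1
      · rcases aux_delta hdisc hfl hβ0 hβ1 x with h2 | h2
        · exfalso; linarith
        · exact Or.inr ((aux_mem_iff hdisc hfl hβ0 hβ1 hβirr hxI hx1).2 h2)
      · exact Or.inl ((aux_mem_iff hdisc hfl hα0 hα1 hαirr hxI hx1).2 h1)
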